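/- Let c ∈ ℝ, ρ(r) = -1/(r - i c), ρ̄ = conj(ρ). Define the second-order operator (L y)(r) = d²y/dr² - 2 ρ̄ dy/dr - 2 ρ̄² y + 2 ρ (ρ̄ - ρ) y, i.e. L y = d/dr[ (d/dr - 2ρ̄) y ] + 2ρ(ρ̄ - ρ) y. Then the functions y₁(r) = ρ̄ (ρ + ρ̄) and y₂(r) = ρ̄ (ρ̄ - 2ρ)/ρ³ both satisfy L y = 0 on (0,∞). -/

import Mathlib

open Complex

noncomputable def rhoK (c : ℝ) (r : ℝ) : ℂ := -1 / ((r : ℂ) - c * Complex.I)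

noncomputable def rhoKbar (c : ℝ) (r : ℝ) : ℂ := (starRingEnd ℂ) (rhoK c r)

noncomputable def Lop (c : ℝ) (y : ℝ → ℂ) (r : ℝ) : ℂ :=
  deriv (deriv y) r - 2 * rhoKbar c r * deriv y r - 2 * (rhoKbar c r) ^ 2 * y r
    + 2 * rhoK c r * (rhoKbar c r - rhoK c r) * y r

lemma zne (c : ℝ) {s : ℝ} (hs : 0 < s) : ((s : ℂ) - c * Complex.I) ≠ 0 := by
  intro h
  have := congrArg Complex.re h
  simp at this
  exact hs.ne' this

lemma wne (c : ℝ) {s : ℝ} (hs : 0 < s) : ((s : ℂ) + c * Complex.I) ≠ 0 := by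
  intro h
  have := congrArg Complex.re h
  simp at this
  exact hs.ne' this

lemma rhoK_ne (c : ℝ) {s : ℝ} (hs : 0 < s) : rhoK c s ≠ 0 := by
  simp [rhoK, zne c hs]

lemma rhoKbar_eq (c : ℝ) (s : ℝ) : rhoKbar c s = -1 / ((s : ℂ) + c * Complex.I) := by
  simp [rhoKbar, rhoK, map_div₀, sub_eq_add_neg]

lemma hasDerivAt_ofReal (s : ℝ) : HasDerivAt (fun t : ℝ => (t : ℂ)) 1 s := by
  exact (hasDerivAt_id s).ofReal_comp

lemma hasDerivAt_rhoK (c : ℝ) {s : ℝ} (hs : 0 < s) :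
    HasDerivAt (rhoK c) ((rhoK c s) ^ 2) s := by
  have hz : HasDerivAt (fun t : ℝ => (t : ℂ) - c * Complex.I) 1 s :=
    (hasDerivAt_ofReal s).sub_const _
  have h := (hasDerivAt_const s (-1 : ℂ)).div hz (zne c hs)
  convert h using 1
  · rfl
  · rfl
  rw [rhoK]
  field_simp
  ring

lemma hasDerivAt_rhoKbar (c : ℝ) {s : ℝ} (hs : 0 < s) :
    HasDerivAt (rhoKbar c) ((rhoKbar c s) ^ 2) s := by
  have hz : HasDerivAt (fun t : ℝ => (t : ℂ) + c * Complex.I) 1 s :=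
    (hasDerivAt_ofReal s).add_const _
  have h := (hasDerivAt_const s (-1 : ℂ)).div hz (wne c hs)
  have he : rhoKbar c = fun t : ℝ => -1 / ((t : ℂ) + c * Complex.I) := by
    funext t; exact rhoKbar_eq c t
  rw [he]
  convert h using 1
  · rfl
  · rfl
  field_simp
  ring

lemma HasDerivAt.cpowNat {f : ℝ → ℂ} {s : ℝ} {d : ℂ} (hf : HasDerivAt f d s) (n : ℕ) :
    HasDerivAt (fun t => f t ^ (n + 1)) ((n + 1 : ℂ) * f s ^ n * d) s := by
  induction n with
  | zero => simpa using hf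
  | succ n ih =>
    have h := ih.mul hf
    have hfun : ((fun t => f t ^ (n + 1)) * f) = fun t => f t ^ (n + 1 + 1) := by
      funext t; simp only [Pi.mul_apply]; ring
    rw [hfun] at h
    convert h using 1
    · rfl
    push_cast
    ring

lemma HasDerivAt.cpowNat' {f : ℝ → ℂ} {s : ℝ} {d : ℂ} (hf : HasDerivAt f d s) (m n : ℕ)
    (h : m = n + 1) : HasDerivAt (fun t => f t ^ m) ((m : ℂ) * f s ^ n * d) s := by
  subst h
  convert hf.cpowNat n using 1
  push_cast
  ring

theorem stmt3 (c : ℝ) (r : ℝ) (hr : 0 < r) :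
    Lop c (fun s => rhoKbar c s * (rhoK c s + rhoKbar c s)) r = 0 ∧
    Lop c (fun s => rhoKbar c s * (rhoKbar c s - 2 * rhoK c s) / (rhoK c s) ^ 3) r = 0 := by
  have hpos : ∀ᶠ s in nhds r, 0 < s := eventually_gt_nhds hr
  constructor
  · set y : ℝ → ℂ := fun s => rhoKbar c s * (rhoK c s + rhoKbar c s) with hy_def
    set g : ℝ → ℂ := fun s =>
      (rhoKbar c s) ^ 2 * (rhoK c s + rhoKbar c s)
        + rhoKbar c s * ((rhoK c s) ^ 2 + (rhoKbar c s) ^ 2) with hg_def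
    have hy : ∀ s, 0 < s → HasDerivAt y (g s) s := fun s hs =>
      (hasDerivAt_rhoKbar c hs).mul ((hasDerivAt_rhoK c hs).add (hasDerivAt_rhoKbar c hs))
    have hdy : deriv y =ᶠ[nhds r] g := by
      filter_upwards [hpos] with s hs
      exact (hy s hs).deriv
    have hg := ((((hasDerivAt_rhoKbar c hr).cpowNat' 2 1 rfl).mul
          ((hasDerivAt_rhoK c hr).add (hasDerivAt_rhoKbar c hr))).add
        ((hasDerivAt_rhoKbar c hr).mul
          (((hasDerivAt_rhoK c hr).cpowNat' 2 1 rfl).add ((hasDerivAt_rhoKbar c hr).cpowNat' 2 1 rfl))))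
    rw [Lop, hdy.deriv_eq, (show deriv g r = _ from hg.deriv), (hy r hr).deriv]
    show _ - _ * g r - _ * y r + _ * y r = 0
    simp only [hy_def, hg_def, Pi.mul_apply, Pi.add_apply]
    push_cast
    ring
  · have hne : ∀ s : ℝ, 0 < s → rhoK c s ≠ 0 := fun s hs => rhoK_ne c hs
    set y : ℝ → ℂ := fun s => rhoKbar c s * (rhoKbar c s - 2 * rhoK c s) / (rhoK c s) ^ 3
      with hy_def
    set g : ℝ → ℂ := fun s =>
      (2 * rhoKbar c s ^ 3 - 5 * rhoKbar c s ^ 2 * rhoK c s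
        + 4 * rhoKbar c s * rhoK c s ^ 2) / rhoK c s ^ 3 with hg_def
    have hy : ∀ s, 0 < s → HasDerivAt y (g s) s := by
      intro s hs
      have hd3 := (hasDerivAt_rhoK c hs).cpowNat' 3 2 rfl
      have h := ((hasDerivAt_rhoKbar c hs).mul
          ((hasDerivAt_rhoKbar c hs).sub ((hasDerivAt_rhoK c hs).const_mul 2))).div
        hd3 (pow_ne_zero 3 (hne s hs))
      convert h using 1
      · rfl
      · rfl
      have hρ := hne s hs
      rw [div_eq_div_iff (pow_ne_zero 3 hρ) (pow_ne_zero 2 (pow_ne_zero 3 hρ))]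
      simp only [Pi.mul_apply, Pi.add_apply, Pi.sub_apply]
      push_cast
      ring
    have hdy : deriv y =ᶠ[nhds r] g := by
      filter_upwards [hpos] with s hs
      exact (hy s hs).deriv
    have hgval : HasDerivAt g
        ((6 * rhoKbar c r ^ 4 - 16 * rhoKbar c r ^ 3 * rhoK c r
          + 14 * rhoKbar c r ^ 2 * rhoK c r ^ 2 - 4 * rhoKbar c r * rhoK c r ^ 3)
          / rhoK c r ^ 3) r := by
      have hnum := ((((hasDerivAt_rhoKbar c hr).cpowNat' 3 2 rfl).const_mul (2:ℂ)).sub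
            ((((hasDerivAt_rhoKbar c hr).cpowNat' 2 1 rfl).const_mul (5:ℂ)).mul (hasDerivAt_rhoK c hr))).add
          (((hasDerivAt_rhoKbar c hr).const_mul (4:ℂ)).mul ((hasDerivAt_rhoK c hr).cpowNat' 2 1 rfl))
      have hd3 := (hasDerivAt_rhoK c hr).cpowNat' 3 2 rfl
      have h := hnum.div hd3 (pow_ne_zero 3 (hne r hr))
      convert h using 1
      · rfl
      · rfl
      have hρ := hne r hr
      rw [div_eq_div_iff (pow_ne_zero 3 hρ) (pow_ne_zero 2 (pow_ne_zero 3 hρ))]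
      simp only [Pi.mul_apply, Pi.add_apply, Pi.sub_apply]
      push_cast
      ring
    rw [Lop, hdy.deriv_eq, hgval.deriv, (hy r hr).deriv]
    show _ - _ * g r - _ * y r + _ * y r = 0
    simp only [hy_def, hg_def]
    field_simp [hne r hr]
    ring
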